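/- Consider a market with n buyers where buyer i has a k_i-demand valuation, the number of items satisfies |M| = Σ_{i=1}^n k_i, and every optimal allocation allocates all items of M and gives each buyer i exactly k_i items. Then an allocation is legal if and only if it is optimal. -/

import Mathlib

open Finset

section Defs

variable {M : Type*} [Fintype M] [DecidableEq M] {ι : Type*} [Fintype ι]

/-- A valuation is monotone. -/
def MonotoneVal (v : Finset M → ℝ) : Prop :=
  ∀ ⦃S T : Finset M⦄, S ⊆ T → v S ≤ v T

/-- Quasi-linear utility of a bundle `S` at prices `p`. -/
def util (v : Finset M → ℝ) (p : M → ℝ) (S : Finset M) : ℝ :=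
  v S - ∑ x ∈ S, p x

/-- `S` is a utility-maximizing bundle for valuation `v` at prices `p`. -/
def InDemand (v : Finset M → ℝ) (p : M → ℝ) (S : Finset M) : Prop :=
  ∀ T : Finset M, util v p T ≤ util v p S

/-- Gross-substitutes valuation. -/
def GrossSubstitutes (v : Finset M → ℝ) : Prop :=
  ∀ p q : M → ℝ, (∀ x, 0 ≤ p x) → (∀ x, 0 ≤ q x) → (∀ x, p x ≤ q x) →
    ∀ A : Finset M, InDemand v p A →
      ∃ B : Finset M, InDemand v q B ∧ ∀ x ∈ A, p x = q x → x ∈ B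

/-- `v` is a `k`-demand (multi-demand) valuation:
`v S` is the maximum of `∑_{x ∈ T} v {x}` over `T ⊆ S` with `|T| ≤ k`. -/
def MultiDemand (v : Finset M → ℝ) (k : ℕ) : Prop :=
  ∀ S : Finset M,
    IsGreatest {t : ℝ | ∃ T ⊆ S, T.card ≤ k ∧ t = ∑ x ∈ T, v {x}} (v S)

/-- `v` is a unit-demand valuation: `v ∅ = 0` and `v S = max_{x ∈ S} v {x}`. -/
def UnitDemand (v : Finset M → ℝ) : Prop :=
  v ∅ = 0 ∧ ∀ S : Finset M, S.Nonempty →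
    IsGreatest {t : ℝ | ∃ x ∈ S, t = v {x}} (v S)

/-- An allocation: a family of pairwise disjoint bundles. -/
def IsAlloc (A : ι → Finset M) : Prop :=
  ∀ i j : ι, i ≠ j → Disjoint (A i) (A j)

/-- Social welfare of an allocation. -/
def SW (v : ι → Finset M → ℝ) (A : ι → Finset M) : ℝ :=
  ∑ i, v i (A i)

/-- An optimal allocation: it maximizes social welfare among allocations. -/
def IsOptimalAlloc (v : ι → Finset M → ℝ) (A : ι → Finset M) : Prop :=
  IsAlloc A ∧ ∀ B : ι → Finset M, IsAlloc B → SW v B ≤ SW v A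

/-- `p` is an optimal dynamic pricing: every demanded bundle of every buyer is
her bundle in some optimal allocation. -/
def IsDynamicPricing (v : ι → Finset M → ℝ) (p : M → ℝ) : Prop :=
  (∀ x, 0 ≤ p x) ∧
  ∀ (i : ι) (S : Finset M), InDemand (v i) p S →
    ∃ A : ι → Finset M, IsOptimalAlloc v A ∧ A i = S

/-- Walrasian equilibrium: every buyer gets a demanded bundle and unallocated
items have price 0. -/
def IsWalrasianEq (v : ι → Finset M → ℝ) (A : ι → Finset M) (p : M → ℝ) : Prop :=
  (∀ x, 0 ≤ p x) ∧ IsAlloc A ∧ (∀ i, InDemand (v i) p (A i)) ∧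
  ∀ x : M, (∀ i, x ∉ A i) → p x = 0

/-- Item `x` is legal for buyer `i`: some optimal allocation gives `x` to `i`. -/
def LegalItem (v : ι → Finset M → ℝ) (i : ι) (x : M) : Prop :=
  ∃ A : ι → Finset M, IsOptimalAlloc v A ∧ x ∈ A i

/-- A bundle `S` is legal for buyer `i`: `|S| = k i` and every item of `S` is legal for `i`. -/
def LegalBundle (v : ι → Finset M → ℝ) (k : ι → ℕ) (i : ι) (S : Finset M) : Prop :=
  S.card = k i ∧ ∀ x ∈ S, LegalItem v i x

/-- A legal allocation: every buyer's bundle is legal for her. -/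
def LegalAlloc (v : ι → Finset M → ℝ) (k : ι → ℕ) (A : ι → Finset M) : Prop :=
  IsAlloc A ∧ ∀ i, LegalBundle v k i (A i)

/-- Submodularity condition (SM). -/
def SMcond (v : Finset M → ℝ) : Prop :=
  ∀ (x y : M) (S : Finset M), x ≠ y → x ∉ S → y ∉ S →
    v S + v (S ∪ {x, y}) ≤ v (S ∪ {x}) + v (S ∪ {y})

/-- Condition (RGP). -/
def RGPcond (v : Finset M → ℝ) : Prop :=
  ∀ (x y z : M) (S : Finset M), x ≠ y → x ≠ z → y ≠ z → x ∉ S → y ∉ S → z ∉ S →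
    v (S ∪ {x}) + v (S ∪ {y, z}) ≤
      max (v (S ∪ {y}) + v (S ∪ {x, z})) (v (S ∪ {z}) + v (S ∪ {x, y}))

/-- Condition (NP-SM) with nonnegative prices. -/
def NPSM (v : Finset M → ℝ) : Prop :=
  ¬ ∃ (p : M → ℝ) (x y : M) (S : Finset M),
      (∀ a, 0 ≤ p a) ∧ x ≠ y ∧ x ∉ S ∧ y ∉ S ∧ 0 < p x ∧ 0 < p y ∧
      InDemand v p S ∧ InDemand v p (S ∪ {x, y}) ∧
      ∀ C : Finset M, InDemand v p C → (C ⊆ S ∨ ∃ T ⊆ S, C = T ∪ {x, y})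

/-- Condition (NP-RGP) with nonnegative prices. -/
def NPRGP (v : Finset M → ℝ) : Prop :=
  ¬ ∃ (p : M → ℝ) (x y z : M) (S : Finset M),
      (∀ a, 0 ≤ p a) ∧ x ≠ y ∧ x ≠ z ∧ y ≠ z ∧ x ∉ S ∧ y ∉ S ∧ z ∉ S ∧
      0 < p x ∧ 0 < p y ∧ 0 < p z ∧
      InDemand v p (S ∪ {x}) ∧ InDemand v p (S ∪ {y, z}) ∧
      ∀ C : Finset M, InDemand v p C →
        ((∃ T ⊆ S, C = T ∪ {x}) ∨ ∃ T ⊆ S, C = T ∪ {y, z})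

end Defs


/-- In a multi-demand market where `|M| = ∑ k i` and every optimal
allocation allocates all items and gives each buyer `i` exactly `k i` items, an
allocation is legal iff it is optimal. -/
theorem legal_iff_optimal
    {M : Type*} [Fintype M] [DecidableEq M] {n : ℕ}
    (v : Fin n → Finset M → ℝ) (k : Fin n → ℕ)
    (hmono : ∀ i, MonotoneVal (v i)) (hnorm : ∀ i, v i ∅ = 0)
    (hmd : ∀ i, MultiDemand (v i) (k i))
    (hcard : Fintype.card M = ∑ i, k i)
    (hopt : ∀ A : Fin n → Finset M, IsOptimalAlloc v A →
      (∀ x : M, ∃ i, x ∈ A i) ∧ ∀ i, (A i).card = k i)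
    (A : Fin n → Finset M) :
    LegalAlloc v k A ↔ IsOptimalAlloc v A := by
  classical
  -- singleton values are nonnegative
  have hw0 : ∀ i (x : M), 0 ≤ v i {x} := by
    intro i x
    exact (hmd i {x}).2 ⟨∅, Finset.empty_subset _, by simp, by simp⟩
  -- value of a small bundle is the sum of singleton values
  have hval : ∀ i (S : Finset M), S.card ≤ k i → v i S = ∑ x ∈ S, v i {x} := by
    intro i S hS
    obtain ⟨T, hT1, _, hT3⟩ := (hmd i S).1
    have h1 : v i S ≤ ∑ x ∈ S, v i {x} := by
      rw [hT3]
      exact Finset.sum_le_sum_of_subset_of_nonneg hT1 fun x _ _ => hw0 i x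
    have h2 : ∑ x ∈ S, v i {x} ≤ v i S := (hmd i S).2 ⟨S, Finset.Subset.rfl, hS, rfl⟩
    linarith
  -- existence of an optimal allocation
  obtain ⟨B0, hB0mem, hB0max⟩ := Finset.exists_max_image
      (Finset.univ.filter fun B : Fin n → Finset M => IsAlloc B) (SW v)
      ⟨fun _ => ∅, Finset.mem_filter.2 ⟨Finset.mem_univ _, fun i j _ => Finset.disjoint_empty_left _⟩⟩
  rw [Finset.mem_filter] at hB0mem
  have hB0 : IsOptimalAlloc v B0 :=
    ⟨hB0mem.2, fun B hB => hB0max B (Finset.mem_filter.2 ⟨Finset.mem_univ _, hB⟩)⟩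
  -- partition lemmas
  have hpart : ∀ P : Fin n → Finset M, IsAlloc P → (∀ i, (P i).card = k i) →
      Finset.univ.biUnion P = (Finset.univ : Finset M) := by
    intro P hP hPc
    apply Finset.eq_univ_of_card
    rw [Finset.card_biUnion (fun i _ j _ hij => hP i j hij)]
    simp [hPc, Finset.card_univ, hcard]
  have hsum_part : ∀ P : Fin n → Finset M, IsAlloc P → (∀ i, (P i).card = k i) →
      ∀ g : M → ℝ, ∑ y : M, g y = ∑ i, ∑ y ∈ P i, g y := by
    intro P hP hPc g
    rw [← hpart P hP hPc, Finset.sum_biUnion (fun i _ j _ hij => hP i j hij)]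
  have howner : ∀ P : Fin n → Finset M, IsAlloc P → (∀ i, (P i).card = k i) →
      ∀ x : M, ∃ i, x ∈ P i ∧ ∀ j, x ∈ P j → j = i := by
    intro P hP hPc x
    have hx : x ∈ Finset.univ.biUnion P := by
      rw [hpart P hP hPc]; exact Finset.mem_univ x
    obtain ⟨i, _, hi⟩ := Finset.mem_biUnion.1 hx
    refine ⟨i, hi, fun j hj => ?_⟩
    by_contra hne
    exact (Finset.disjoint_left.1 (hP j i hne) hj hi).elim
  constructor
  · -- legal → optimal
    intro hA
    obtain ⟨hAalloc, hAleg⟩ := hA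
    have hAcard : ∀ i, (A i).card = k i := fun i => (hAleg i).1
    have hSWW : ∀ P : Fin n → Finset M, (∀ i, (P i).card = k i) →
        SW v P = ∑ i, ∑ x ∈ P i, v i {x} :=
      fun P hPc => Finset.sum_congr rfl fun i _ => hval i (P i) (hPc i).le
    have key : SW v B0 ≤ SW v A := by
      rcases Nat.eq_zero_or_pos (Fintype.card M) with hm | hm
      · have hM : IsEmpty M := Fintype.card_eq_zero_iff.mp hm
        have h0 : ∀ P : Fin n → Finset M, SW v P = 0 := by
          intro P
          apply Finset.sum_eq_zero
          intro i _
          have hPe : P i = ∅ := Finset.eq_empty_of_forall_notMem fun x _ => hM.elim x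
          rw [hPe, hnorm]
        rw [h0, h0]
      · set mR : ℝ := (Fintype.card M : ℝ) with hmRdef
        have hmR : 0 < mR := by rw [hmRdef]; exact_mod_cast hm
        have hB0c : ∀ i, (B0 i).card = k i := (hopt B0 hB0).2
        choose bo hbo1 hbo2 using howner B0 hB0.1 hB0c
        choose ao hao1 hao2 using howner A hAalloc hAcard
        choose C hC1 hC2 using fun x : M => (hAleg (ao x)).2 x (hao1 x)
        have hCc : ∀ x : M, ∀ i, ((C x) i).card = k i := fun x => (hopt (C x) (hC1 x)).2
        have hOPT : ∀ P, IsOptimalAlloc v P → SW v P = SW v B0 :=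
          fun P hP => le_antisymm (hB0.2 P hP.1) (hP.2 B0 hB0.1)
        set ind : (Fin n → Finset M) → Fin n → M → ℝ :=
          fun P i x => if x ∈ P i then 1 else 0 with hinddef
        have hind_nonneg : ∀ P i (x : M), 0 ≤ ind P i x := by
          intro P i x; simp only [hinddef]; split <;> norm_num
        have hind_row : ∀ P : Fin n → Finset M, IsAlloc P → (∀ i, (P i).card = k i) →
            ∀ x, ∑ i, ind P i x = 1 := by
          intro P hP hPc x
          obtain ⟨i, hi, hu⟩ := howner P hP hPc x
          rw [Finset.sum_eq_single i]
          · simp [hinddef, hi]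
          · intro j _ hj
            simp only [hinddef]
            rw [if_neg fun hxj => hj (hu j hxj)]
          · intro h; exact absurd (Finset.mem_univ i) h
        have hind_col : ∀ (P : Fin n → Finset M) i,
            ∑ x : M, ind P i x = ((P i).card : ℝ) := by
          intro P i
          simp [hinddef, Finset.sum_boole, Finset.filter_univ_mem]
        have hind_w : ∀ (P : Fin n → Finset M) (i),
            ∑ x : M, ind P i x * v i {x} = ∑ x ∈ P i, v i {x} := by
          intro P i
          simp only [hinddef, ite_mul, one_mul, zero_mul]
          rw [Finset.sum_ite_mem, Finset.univ_inter]
        set cnt : Fin n → M → ℝ := fun i x => ∑ x' : M, ind (C x') i x with hcntdef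
        set Z : Fin n → M → ℝ :=
          fun i x => ((mR + 1) * cnt i x - mR * ind A i x) / (mR * mR) with hZdef
        have hcnt0 : ∀ i (x : M), 0 ≤ cnt i x :=
          fun i x => Finset.sum_nonneg fun x' _ => hind_nonneg _ _ _
        have hZnn : ∀ i (x : M), 0 ≤ Z i x := by
          intro i x
          apply div_nonneg _ (by positivity)
          by_cases hx : x ∈ A i
          · have hia : i = ao x := hao2 x i hx
            have hCx : x ∈ C x i := by rw [hia]; exact hC2 x
            have h1 : (1:ℝ) ≤ cnt i x := by
              have he : ind (C x) i x = 1 := by simp [hinddef, hCx]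
              calc (1:ℝ) = ind (C x) i x := he.symm
                _ ≤ cnt i x :=
                  Finset.single_le_sum (fun x' _ => hind_nonneg (C x') i x) (Finset.mem_univ x)
            have h2 : ind A i x = 1 := by simp [hinddef, hx]
            rw [h2]; nlinarith
          · have h2 : ind A i x = 0 := by simp [hinddef, hx]
            rw [h2]
            have := hcnt0 i x
            nlinarith
        have hZ0 : ∀ i (x : M), k i = 0 → Z i x = 0 := by
          intro i x hk
          have hA0 : A i = ∅ := Finset.card_eq_zero.1 (by rw [hAcard i, hk])
          have hC0 : ∀ x' : M, C x' i = ∅ :=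
            fun x' => Finset.card_eq_zero.1 (by rw [hCc x' i, hk])
          have h1 : cnt i x = 0 := Finset.sum_eq_zero fun x' _ => by simp [hinddef, hC0 x']
          have h2 : ind A i x = 0 := by simp [hinddef, hA0]
          simp only [hZdef]
          rw [h1, h2]
          ring
        have hZrow : ∀ x : M, ∑ i, Z i x = 1 := by
          intro x
          have h1 : ∑ i, cnt i x = mR := by
            simp only [hcntdef]
            rw [Finset.sum_comm,
              Finset.sum_congr rfl fun x' _ => hind_row (C x') (hC1 x').1 (hCc x') x]
            simp [Finset.card_univ, hmRdef]
          have h2 : ∑ i, ind A i x = 1 := hind_row A hAalloc hAcard x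
          simp only [hZdef]
          rw [← Finset.sum_div, Finset.sum_sub_distrib, ← Finset.mul_sum, ← Finset.mul_sum,
            h1, h2]
          field_simp
          ring
        have hZcol : ∀ i, ∑ x : M, Z i x = (k i : ℝ) := by
          intro i
          have h1 : ∑ x : M, cnt i x = mR * (k i : ℝ) := by
            simp only [hcntdef]
            rw [Finset.sum_comm,
              Finset.sum_congr rfl fun x' _ => hind_col (C x') i,
              Finset.sum_congr rfl fun x' _ => by rw [hCc x' i]]
            simp [Finset.card_univ, hmRdef, mul_comm]
          have h2 : ∑ x : M, ind A i x = (k i : ℝ) := by rw [hind_col A i, hAcard i]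
          simp only [hZdef]
          rw [← Finset.sum_div, Finset.sum_sub_distrib, ← Finset.mul_sum, ← Finset.mul_sum,
            h1, h2]
          field_simp
          ring
        -- fiberwise summation over B0
        have hkbo : ∀ y : M, 0 < (k (bo y) : ℝ) := by
          intro y
          have h : 0 < k (bo y) := by
            rw [← hB0c (bo y)]
            exact Finset.card_pos.2 ⟨y, hbo1 y⟩
          exact_mod_cast h
        have hfiber : ∀ g : Fin n → ℝ, (∀ i, k i = 0 → g i = 0) →
            ∑ y : M, g (bo y) / (k (bo y) : ℝ) = ∑ i, g i := by
          intro g hg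
          rw [hsum_part B0 hB0.1 hB0c (fun y => g (bo y) / (k (bo y) : ℝ))]
          refine Finset.sum_congr rfl fun i _ => ?_
          have hcst : ∀ y ∈ B0 i, g (bo y) / (k (bo y) : ℝ) = g i / (k i : ℝ) := by
            intro y hy
            rw [← hbo2 y i hy]
          rw [Finset.sum_congr rfl hcst, Finset.sum_const, hB0c i, nsmul_eq_mul]
          rcases Nat.eq_zero_or_pos (k i) with h | h
          · rw [hg i h, h]; simp
          · have hk0 : (k i : ℝ) ≠ 0 := by
              have : (0:ℝ) < (k i : ℝ) := by exact_mod_cast h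
              exact this.ne'
            rw [mul_comm, div_mul_cancel₀ _ hk0]
        -- the doubly stochastic matrix
        set z : Matrix M M ℝ := Matrix.of fun x y => Z (bo y) x / (k (bo y) : ℝ) with hzdef
        have hzapp : ∀ x y : M, z x y = Z (bo y) x / (k (bo y) : ℝ) := fun x y => rfl
        have hzds : z ∈ doublyStochastic ℝ M := by
          rw [mem_doublyStochastic_iff_sum]
          refine ⟨fun x y => div_nonneg (hZnn _ _) (hkbo y).le, fun x => ?_, fun y => ?_⟩
          · rw [Finset.sum_congr rfl fun y _ => hzapp x y,
              hfiber (fun i => Z i x) (fun i h => hZ0 i x h)]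
            exact hZrow x
          · rw [Finset.sum_congr rfl fun x _ => hzapp x y, ← Finset.sum_div, hZcol (bo y),
              div_self (hkbo y).ne']
        obtain ⟨cw, hcw0, hcw1, hcwsum⟩ := exists_eq_sum_perm_of_mem_doublyStochastic hzds
        -- value of the matrix weight
        set WA : ℝ := ∑ i, ∑ x ∈ A i, v i {x} with hWAdef
        have hTval : ∑ x : M, ∑ y : M, z x y * v (bo y) {x}
            = ((mR + 1) * (mR * SW v B0) - mR * WA) / (mR * mR) := by
          rw [Finset.sum_comm]
          have hstep : ∀ y : M, ∑ x : M, z x y * v (bo y) {x}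
              = (∑ x : M, Z (bo y) x * v (bo y) {x}) / (k (bo y) : ℝ) := by
            intro y
            rw [Finset.sum_div]
            refine Finset.sum_congr rfl fun x _ => ?_
            rw [hzapp x y, div_mul_eq_mul_div]
          have h1 : ∑ y : M, (∑ x : M, Z (bo y) x * v (bo y) {x}) / (k (bo y) : ℝ)
              = ∑ i, ∑ x : M, Z i x * v i {x} :=
            hfiber (fun i => ∑ x : M, Z i x * v i {x})
              (fun i hki => Finset.sum_eq_zero fun x _ => by rw [hZ0 i x hki, zero_mul])
          rw [Finset.sum_congr rfl fun y _ => hstep y, h1]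
          have hZw : ∀ i, ∑ x : M, Z i x * v i {x}
              = ((mR + 1) * (∑ x : M, cnt i x * v i {x})
                - mR * (∑ x : M, ind A i x * v i {x})) / (mR * mR) := by
            intro i
            have hterm : ∀ x : M, Z i x * v i {x}
                = ((mR + 1) * (cnt i x * v i {x}) - mR * (ind A i x * v i {x})) / (mR * mR) := by
              intro x; simp only [hZdef]; ring
            rw [Finset.sum_congr rfl fun x _ => hterm x, ← Finset.sum_div,
              Finset.sum_sub_distrib, ← Finset.mul_sum, ← Finset.mul_sum]
          rw [Finset.sum_congr rfl fun i _ => hZw i, ← Finset.sum_div,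
            Finset.sum_sub_distrib, ← Finset.mul_sum, ← Finset.mul_sum]
          have hc : ∑ i, ∑ x : M, cnt i x * v i {x} = mR * SW v B0 := by
            have hswap : ∀ i, ∑ x : M, cnt i x * v i {x}
                = ∑ x' : M, ∑ x : M, ind (C x') i x * v i {x} := by
              intro i
              rw [← Finset.sum_comm]
              refine Finset.sum_congr rfl fun x _ => ?_
              simp only [hcntdef]
              rw [Finset.sum_mul]
            rw [Finset.sum_congr rfl fun i _ => hswap i, Finset.sum_comm]
            have hCx : ∀ x' : M, ∑ i, ∑ x : M, ind (C x') i x * v i {x} = SW v B0 := by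
              intro x'
              rw [Finset.sum_congr rfl fun i _ => hind_w (C x') i]
              rw [← hSWW (C x') (hCc x'), hOPT (C x') (hC1 x')]
            rw [Finset.sum_congr rfl fun x' _ => hCx x']
            simp [Finset.card_univ, hmRdef]
          have ha : ∑ i, ∑ x : M, ind A i x * v i {x} = WA := by
            rw [hWAdef]
            exact Finset.sum_congr rfl fun i _ => hind_w A i
          rw [hc, ha]
        -- permutation bound
        have hperm : ∀ σ : Equiv.Perm M,
            ∑ x : M, ∑ y : M, (σ.permMatrix ℝ) x y * v (bo y) {x} ≤ SW v B0 := by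
          intro σ
          have hentry : ∀ x : M, ∑ y : M, (σ.permMatrix ℝ) x y * v (bo y) {x}
              = v (bo (σ x)) {x} := by
            intro x
            rw [Finset.sum_eq_single (σ x)]
            · simp [Equiv.Perm.permMatrix, PEquiv.toMatrix_apply, Equiv.toPEquiv_apply]
            · intro y _ hy
              rw [show (σ.permMatrix ℝ) x y = 0 by
                simp [Equiv.Perm.permMatrix, PEquiv.toMatrix_apply, Equiv.toPEquiv_apply,
                  Ne.symm hy], zero_mul]
            · intro h; exact absurd (Finset.mem_univ (σ x)) h
          rw [Finset.sum_congr rfl fun x _ => hentry x]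
          set D : Fin n → Finset M := fun i => Finset.univ.filter fun x => bo (σ x) = i
            with hDdef
          have hDalloc : IsAlloc D := by
            intro i j hij
            rw [Finset.disjoint_left]
            intro x hxi hxj
            simp only [hDdef, Finset.mem_filter] at hxi hxj
            exact hij (hxi.2 ▸ hxj.2 ▸ rfl)
          have hDcard : ∀ i, (D i).card = k i := by
            intro i
            rw [← hB0c i]
            apply Finset.card_nbij (fun x => σ x)
            · intro x hx
              simp only [hDdef, Finset.mem_coe, Finset.mem_filter] at hx
              rw [← hx.2]
              exact hbo1 (σ x)
            · intro x _ x' _ h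
              exact σ.injective h
            · intro y hy
              refine ⟨σ.symm y, ?_, by simp⟩
              simp only [hDdef, Finset.coe_filter, Set.mem_setOf_eq, Finset.mem_univ, true_and]
              rw [Equiv.apply_symm_apply]
              exact (hbo2 y i (by simpa using hy)).symm
          have hsw : ∑ x : M, v (bo (σ x)) {x} = SW v D := by
            rw [hsum_part D hDalloc hDcard (fun x => v (bo (σ x)) {x}),
              hSWW D hDcard]
            refine Finset.sum_congr rfl fun i _ => Finset.sum_congr rfl fun x hx => ?_
            simp only [hDdef, Finset.mem_filter] at hx
            rw [hx.2]
          rw [hsw]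
          exact hB0.2 D hDalloc
        -- combine with Birkhoff decomposition
        have hTle : ∑ x : M, ∑ y : M, z x y * v (bo y) {x} ≤ SW v B0 := by
          have hz_entry : ∀ x y : M, z x y
              = ∑ σ : Equiv.Perm M, cw σ * (σ.permMatrix ℝ) x y := by
            intro x y
            rw [← hcwsum]
            simp [Matrix.sum_apply]
          have e1 : ∀ x y : M, z x y * v (bo y) {x}
              = ∑ σ : Equiv.Perm M, cw σ * ((σ.permMatrix ℝ) x y * v (bo y) {x}) := by
            intro x y
            rw [hz_entry x y, Finset.sum_mul]
            exact Finset.sum_congr rfl fun σ _ => mul_assoc _ _ _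
          have hswap : ∑ x : M, ∑ y : M, z x y * v (bo y) {x}
              = ∑ σ : Equiv.Perm M, cw σ * ∑ x : M, ∑ y : M,
                  (σ.permMatrix ℝ) x y * v (bo y) {x} :=
            calc ∑ x : M, ∑ y : M, z x y * v (bo y) {x}
                = ∑ x : M, ∑ y : M, ∑ σ : Equiv.Perm M,
                    cw σ * ((σ.permMatrix ℝ) x y * v (bo y) {x}) :=
                  Finset.sum_congr rfl fun x _ => Finset.sum_congr rfl fun y _ => e1 x y
              _ = ∑ x : M, ∑ σ : Equiv.Perm M, ∑ y : M,
                    cw σ * ((σ.permMatrix ℝ) x y * v (bo y) {x}) :=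
                  Finset.sum_congr rfl fun x _ => Finset.sum_comm
              _ = ∑ σ : Equiv.Perm M, ∑ x : M, ∑ y : M,
                    cw σ * ((σ.permMatrix ℝ) x y * v (bo y) {x}) := Finset.sum_comm
              _ = ∑ σ : Equiv.Perm M, cw σ * ∑ x : M, ∑ y : M,
                    (σ.permMatrix ℝ) x y * v (bo y) {x} := by
                  refine Finset.sum_congr rfl fun σ _ => ?_
                  rw [Finset.mul_sum]
                  exact Finset.sum_congr rfl fun x _ => by rw [Finset.mul_sum]
          calc ∑ x : M, ∑ y : M, z x y * v (bo y) {x}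
              = ∑ σ : Equiv.Perm M, cw σ * ∑ x : M, ∑ y : M,
                  (σ.permMatrix ℝ) x y * v (bo y) {x} := hswap
            _ ≤ ∑ σ : Equiv.Perm M, cw σ * SW v B0 :=
                Finset.sum_le_sum fun σ _ => mul_le_mul_of_nonneg_left (hperm σ) (hcw0 σ)
            _ = SW v B0 := by rw [← Finset.sum_mul, hcw1, one_mul]
        -- conclude
        have hfin : SW v B0 ≤ WA := by
          rw [hTval] at hTle
          rw [div_le_iff₀ (by positivity)] at hTle
          nlinarith
        rw [hSWW A hAcard]
        exact hfin
    exact ⟨hAalloc, fun B hB => le_trans (hB0.2 B hB) key⟩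
  · intro hA
    exact ⟨hA.1, fun i => ⟨(hopt A hA).2 i, fun x hx => ⟨A, hA, hx⟩⟩⟩
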